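/- arXiv:2301.08672 — 2 statements merged into one kernel-verified Lean document; each statement's English description precedes it below -/
import Mathlib

section
/- The abelianization functor Ab : XMod → XMod, sending (N₁, N₂, ∂) to (N₁/[N₂,N₁], N₂/[N₂,N₂]) with the induced connecting homomorphism and action and with coaugmentation the canonical quotient maps, is admissible for the class of regular epimorphisms. -/
set_option linter.unusedVariables false

/-- A crossed module of groups `(M, G, d)` with `G` acting on `M`. -/
structure XMod : Type 1 where
  M : Type
  G : Type
  [grpM : Group M]
  [grpG : Group G]
  act : G →* MulAut M
  d : M →* G
  act_d : ∀ (b : G) (t : M), d (act b t) = b * d t * b⁻¹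
  peiffer : ∀ (t s : M), act (d t) s = t * s * t⁻¹

attribute [instance] XMod.grpM XMod.grpG

/-- A morphism of crossed modules. -/
structure XModHom (N T : XMod) where
  f1 : N.M →* T.M
  f2 : N.G →* T.G
  comm_d : ∀ n, T.d (f1 n) = f2 (N.d n)
  equiv : ∀ (b : N.G) (n : N.M), f1 (N.act b n) = T.act (f2 b) (f1 n)

namespace XModHom

theorem ext {N T : XMod} {f g : XModHom N T} (h1 : f.f1 = g.f1) (h2 : f.f2 = g.f2) :
    f = g := by
  cases f; cases g; cases h1; cases h2; rfl

/-- The identity morphism. -/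
def id (T : XMod) : XModHom T T :=
  ⟨MonoidHom.id _, MonoidHom.id _, fun _ => rfl, fun _ _ => rfl⟩

/-- Composition of morphisms of crossed modules. -/
def comp {A B C : XMod} (g : XModHom B C) (f : XModHom A B) : XModHom A C where
  f1 := g.f1.comp f.f1
  f2 := g.f2.comp f.f2
  comm_d := by intro n; simp [MonoidHom.comp_apply, g.comm_d, f.comm_d]
  equiv := by intro b n; simp [MonoidHom.comp_apply, f.equiv, g.equiv]

/-- The trivial morphism of crossed modules. -/
def triv (A B : XMod) : XModHom A B where
  f1 := 1
  f2 := 1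
  comm_d := by intro n; simp
  equiv := by intro b n; simp

/-- A morphism of crossed modules is an isomorphism if it has a two-sided inverse. -/
def IsIso {A B : XMod} (f : XModHom A B) : Prop :=
  ∃ g : XModHom B A, comp g f = id A ∧ comp f g = id B

/-- Regular epimorphisms of crossed modules are exactly the componentwise
surjective morphisms. -/
def RegEpi {A B : XMod} (f : XModHom A B) : Prop :=
  Function.Surjective f.f1 ∧ Function.Surjective f.f2

/-- `κ` is a kernel of `α` (in the categorical sense). -/
def IsKernelOf {N T Q : XMod} (κ : XModHom N T) (α : XModHom T Q) : Prop :=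
  comp α κ = triv N Q ∧
    ∀ (X : XMod) (u : XModHom X T), comp α u = triv X Q →
      ∃! v : XModHom X N, comp κ v = u

end XModHom

/-- `1 → N → T → Q → 1` is a short exact sequence of crossed modules. -/
def ShortExact {N T Q : XMod} (κ : XModHom N T) (α : XModHom T Q) : Prop :=
  XModHom.IsKernelOf κ α ∧ XModHom.RegEpi α
/-- A localization functor (coaugmented idempotent functor) on `XMod`. -/
structure LocalizationFunctor where
  obj : XMod → XMod
  map : ∀ {A B : XMod}, XModHom A B → XModHom (obj A) (obj B)
  map_id : ∀ A : XMod, map (XModHom.id A) = XModHom.id (obj A)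
  map_comp : ∀ {A B C : XMod} (f : XModHom A B) (g : XModHom B C),
    map (XModHom.comp g f) = XModHom.comp (map g) (map f)
  ell : ∀ A : XMod, XModHom A (obj A)
  natural : ∀ {A B : XMod} (f : XModHom A B),
    XModHom.comp (ell B) f = XModHom.comp (map f) (ell A)
  iso_ell_obj : ∀ A : XMod, XModHom.IsIso (ell (obj A))
  iso_map_ell : ∀ A : XMod, XModHom.IsIso (map (ell A))

namespace LocalizationFunctor

/-- A crossed module is `L`-local if its coaugmentation is an isomorphism. -/
def IsLocal (L : LocalizationFunctor) (X : XMod) : Prop :=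
  XModHom.IsIso (L.ell X)

/-- `L` is a regular-epi localization if every coaugmentation morphism is a
regular epimorphism. -/
def RegEpiLoc (L : LocalizationFunctor) : Prop :=
  ∀ X : XMod, XModHom.RegEpi (L.ell X)

/-- A short exact sequence is `L`-flat if applying `L` yields a short exact sequence. -/
def LFlat (L : LocalizationFunctor) {N T Q : XMod} (κ : XModHom N T) (α : XModHom T Q) : Prop :=
  ShortExact (L.map κ) (L.map α)

end LocalizationFunctor
section Pullback

variable {T Q Q' : XMod} (α : XModHom T Q) (g : XModHom Q' Q)

/-- Level-1 part of the pullback `T ×_Q Q'`, computed componentwise. -/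
def pbM : Subgroup (T.M × Q'.M) where
  carrier := {p | α.f1 p.1 = g.f1 p.2}
  one_mem' := by simp
  mul_mem' := by
    intro a b ha hb
    simp only [Set.mem_setOf_eq, Prod.fst_mul, Prod.snd_mul, map_mul] at *
    rw [ha, hb]
  inv_mem' := by
    intro a ha
    simp only [Set.mem_setOf_eq, Prod.fst_inv, Prod.snd_inv, map_inv] at *
    rw [ha]

/-- Level-2 part of the pullback `T ×_Q Q'`, computed componentwise. -/
def pbG : Subgroup (T.G × Q'.G) where
  carrier := {p | α.f2 p.1 = g.f2 p.2}
  one_mem' := by simp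
  mul_mem' := by
    intro a b ha hb
    simp only [Set.mem_setOf_eq, Prod.fst_mul, Prod.snd_mul, map_mul] at *
    rw [ha, hb]
  inv_mem' := by
    intro a ha
    simp only [Set.mem_setOf_eq, Prod.fst_inv, Prod.snd_inv, map_inv] at *
    rw [ha]

theorem mem_pbM_iff (p : T.M × Q'.M) : p ∈ pbM α g ↔ α.f1 p.1 = g.f1 p.2 := Iff.rfl

theorem mem_pbG_iff (p : T.G × Q'.G) : p ∈ pbG α g ↔ α.f2 p.1 = g.f2 p.2 := Iff.rfl

theorem pb_act_mem {b : T.G × Q'.G} (hb : b ∈ pbG α g) {p : T.M × Q'.M}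
    (hp : p ∈ pbM α g) : (T.act b.1 p.1, Q'.act b.2 p.2) ∈ pbM α g := by
  have hb' : α.f2 b.1 = g.f2 b.2 := hb
  have hp' : α.f1 p.1 = g.f1 p.2 := hp
  show α.f1 (T.act b.1 p.1) = g.f1 (Q'.act b.2 p.2)
  rw [α.equiv, g.equiv, hb', hp']

theorem XMod.act_inv_act (X : XMod) (b : X.G) (t : X.M) :
    X.act b⁻¹ (X.act b t) = t := by
  rw [← MulAut.mul_apply, ← map_mul, inv_mul_cancel, map_one, MulAut.one_apply]

theorem XMod.act_act_inv (X : XMod) (b : X.G) (t : X.M) :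
    X.act b (X.act b⁻¹ t) = t := by
  rw [← MulAut.mul_apply, ← map_mul, mul_inv_cancel, map_one, MulAut.one_apply]

/-- The action of an element of the pullback on the level-1 part, as a group
automorphism. -/
def pbActEquiv (b : ↥(pbG α g)) : ↥(pbM α g) ≃* ↥(pbM α g) where
  toFun p := ⟨(T.act b.1.1 p.1.1, Q'.act b.1.2 p.1.2), pb_act_mem α g b.2 p.2⟩
  invFun p := ⟨(T.act b.1.1⁻¹ p.1.1, Q'.act b.1.2⁻¹ p.1.2),
    pb_act_mem α g ((pbG α g).inv_mem b.2) p.2⟩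
  left_inv p := by
    apply Subtype.ext
    exact Prod.ext (T.act_inv_act _ _) (Q'.act_inv_act _ _)
  right_inv p := by
    apply Subtype.ext
    exact Prod.ext (T.act_act_inv _ _) (Q'.act_act_inv _ _)
  map_mul' p q := by
    apply Subtype.ext
    exact Prod.ext (map_mul _ _ _) (map_mul _ _ _)

/-- The pullback `T ×_Q Q'` of `α : T → Q` along `g : Q' → Q`, computed
componentwise. -/
def pbXMod : XMod where
  M := ↥(pbM α g)
  G := ↥(pbG α g)
  act :=
    { toFun := pbActEquiv α g
      map_one' := by
        apply MulEquiv.ext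
        intro p
        apply Subtype.ext
        apply Prod.ext
        · show T.act (1 : ↥(pbG α g)).1.1 p.1.1 = p.1.1
          simp
        · show Q'.act (1 : ↥(pbG α g)).1.2 p.1.2 = p.1.2
          simp
      map_mul' := by
        intro b c
        apply MulEquiv.ext
        intro p
        apply Subtype.ext
        apply Prod.ext
        · show T.act (b * c).1.1 p.1.1 = T.act b.1.1 (T.act c.1.1 p.1.1)
          simp [map_mul]
        · show Q'.act (b * c).1.2 p.1.2 = Q'.act b.1.2 (Q'.act c.1.2 p.1.2)
          simp [map_mul] }
  d :=
    { toFun := fun p => ⟨(T.d p.1.1, Q'.d p.1.2), by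
        have hp : α.f1 p.1.1 = g.f1 p.1.2 := p.2
        show α.f2 (T.d p.1.1) = g.f2 (Q'.d p.1.2)
        rw [← α.comm_d, ← g.comm_d, hp]⟩
      map_one' := by
        apply Subtype.ext
        apply Prod.ext <;> simp
      map_mul' := by
        intro p q
        apply Subtype.ext
        apply Prod.ext <;> simp }
  act_d := by
    intro b p
    apply Subtype.ext
    apply Prod.ext
    · exact T.act_d _ _
    · exact Q'.act_d _ _
  peiffer := by
    intro p q
    apply Subtype.ext
    apply Prod.ext
    · exact T.peiffer _ _
    · exact Q'.peiffer _ _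

/-- First projection of the pullback. -/
def pbFst : XModHom (pbXMod α g) T where
  f1 := (MonoidHom.fst T.M Q'.M).comp (pbM α g).subtype
  f2 := (MonoidHom.fst T.G Q'.G).comp (pbG α g).subtype
  comm_d := fun _ => rfl
  equiv := fun _ _ => rfl

/-- Second projection of the pullback. -/
def pbSnd : XModHom (pbXMod α g) Q' where
  f1 := (MonoidHom.snd T.M Q'.M).comp (pbM α g).subtype
  f2 := (MonoidHom.snd T.G Q'.G).comp (pbG α g).subtype
  comm_d := fun _ => rfl
  equiv := fun _ _ => rfl

end Pullback
section PullbackMaps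

variable {N T Q Q' : XMod}

/-- The induced morphism from the kernel `N` into the pullback `T ×_Q Q'`. -/
def pbIn (κ : XModHom N T) (α : XModHom T Q) (g : XModHom Q' Q)
    (h : XModHom.comp α κ = XModHom.triv N Q) : XModHom N (pbXMod α g) where
  f1 :=
    { toFun := fun n => ⟨(κ.f1 n, 1), by
        show α.f1 (κ.f1 n) = g.f1 1
        have := congrArg XModHom.f1 h
        have h' : α.f1 (κ.f1 n) = 1 := DFunLike.congr_fun this n
        rw [h', map_one]⟩
      map_one' := by
        apply Subtype.ext
        apply Prod.ext <;> simp <;> first | rfl | exact map_one _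
      map_mul' := by
        intro a b
        apply Subtype.ext
        show (κ.f1 (a * b), (1 : Q'.M)) = (κ.f1 a, (1 : Q'.M)) * (κ.f1 b, (1 : Q'.M))
        simp [Prod.ext_iff, map_mul] }
  f2 :=
    { toFun := fun n => ⟨(κ.f2 n, 1), by
        show α.f2 (κ.f2 n) = g.f2 1
        have := congrArg XModHom.f2 h
        have h' : α.f2 (κ.f2 n) = 1 := DFunLike.congr_fun this n
        rw [h', map_one]⟩
      map_one' := by
        apply Subtype.ext
        apply Prod.ext <;> simp <;> first | rfl | exact map_one _
      map_mul' := by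
        intro a b
        apply Subtype.ext
        show (κ.f2 (a * b), (1 : Q'.G)) = (κ.f2 a, (1 : Q'.G)) * (κ.f2 b, (1 : Q'.G))
        simp [Prod.ext_iff, map_mul] }
  comm_d := by
    intro n
    apply Subtype.ext
    apply Prod.ext
    · exact κ.comm_d n
    · show Q'.d (1 : Q'.M) = 1
      simp
  equiv := by
    intro b n
    apply Subtype.ext
    apply Prod.ext
    · exact κ.equiv b n
    · show (1 : Q'.M) = Q'.act 1 1
      simp

/-- The induced morphism into the pullback `T ×_Q Q'` from an object mapping
trivially to `Q` through the second leg. -/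
def pbInR (α : XModHom T Q) (g : XModHom Q' Q) {X : XMod} (u : XModHom X Q')
    (h : XModHom.comp g u = XModHom.triv X Q) : XModHom X (pbXMod α g) where
  f1 :=
    { toFun := fun n => ⟨(1, u.f1 n), by
        show α.f1 1 = g.f1 (u.f1 n)
        have := congrArg XModHom.f1 h
        have h' : g.f1 (u.f1 n) = 1 := DFunLike.congr_fun this n
        rw [h', map_one]⟩
      map_one' := by
        apply Subtype.ext
        apply Prod.ext <;> simp <;> first | rfl | exact map_one _
      map_mul' := by
        intro a b
        apply Subtype.ext
        show ((1 : T.M), u.f1 (a * b)) = ((1 : T.M), u.f1 a) * ((1 : T.M), u.f1 b)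
        simp [Prod.ext_iff, map_mul] }
  f2 :=
    { toFun := fun n => ⟨(1, u.f2 n), by
        show α.f2 1 = g.f2 (u.f2 n)
        have := congrArg XModHom.f2 h
        have h' : g.f2 (u.f2 n) = 1 := DFunLike.congr_fun this n
        rw [h', map_one]⟩
      map_one' := by
        apply Subtype.ext
        apply Prod.ext <;> simp <;> first | rfl | exact map_one _
      map_mul' := by
        intro a b
        apply Subtype.ext
        show ((1 : T.G), u.f2 (a * b)) = ((1 : T.G), u.f2 a) * ((1 : T.G), u.f2 b)
        simp [Prod.ext_iff, map_mul] }
  comm_d := by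
    intro n
    apply Subtype.ext
    apply Prod.ext
    · show T.d (1 : T.M) = 1
      simp
    · exact u.comm_d n
  equiv := by
    intro b n
    apply Subtype.ext
    apply Prod.ext
    · show (1 : T.M) = T.act 1 1
      simp
    · exact u.equiv b n

/-- The morphism of pullbacks `T ×_Q Q' → E ×_Q Q'` induced by `f : T → E`
with `p ∘ f = α`. -/
def pbMapL {E : XMod} (α : XModHom T Q) (p : XModHom E Q) (g : XModHom Q' Q)
    (f : XModHom T E) (hpf : XModHom.comp p f = α) :
    XModHom (pbXMod α g) (pbXMod p g) where
  f1 :=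
    { toFun := fun w => ⟨(f.f1 w.1.1, w.1.2), by
        show p.f1 (f.f1 w.1.1) = g.f1 w.1.2
        have h' : p.f1 (f.f1 w.1.1) = α.f1 w.1.1 :=
          DFunLike.congr_fun (congrArg XModHom.f1 hpf) w.1.1
        rw [h']
        exact w.2⟩
      map_one' := by
        apply Subtype.ext
        apply Prod.ext <;> simp <;> first | rfl | exact map_one _
      map_mul' := by
        intro a b
        apply Subtype.ext
        apply Prod.ext
        · exact map_mul f.f1 a.1.1 b.1.1
        · rfl }
  f2 :=
    { toFun := fun w => ⟨(f.f2 w.1.1, w.1.2), by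
        show p.f2 (f.f2 w.1.1) = g.f2 w.1.2
        have h' : p.f2 (f.f2 w.1.1) = α.f2 w.1.1 :=
          DFunLike.congr_fun (congrArg XModHom.f2 hpf) w.1.1
        rw [h']
        exact w.2⟩
      map_one' := by
        apply Subtype.ext
        apply Prod.ext <;> simp <;> first | rfl | exact map_one _
      map_mul' := by
        intro a b
        apply Subtype.ext
        apply Prod.ext
        · exact map_mul f.f2 a.1.1 b.1.1
        · rfl }
  comm_d := by
    intro w
    apply Subtype.ext
    apply Prod.ext
    · exact f.comm_d _
    · rfl
  equiv := by
    intro b w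
    apply Subtype.ext
    apply Prod.ext
    · exact f.equiv _ _
    · rfl

end PullbackMaps

/-- A commuting square is a pullback square (categorical definition). -/
def IsPullbackSquare {P X Y Z : XMod} (p1 : XModHom P X) (p2 : XModHom P Y)
    (f : XModHom X Z) (h : XModHom Y Z) : Prop :=
  XModHom.comp f p1 = XModHom.comp h p2 ∧
    ∀ (W : XMod) (u : XModHom W X) (v : XModHom W Y),
      XModHom.comp f u = XModHom.comp h v →
        ∃! w : XModHom W P, XModHom.comp p1 w = u ∧ XModHom.comp p2 w = v

namespace LocalizationFunctor

/-- `L` is admissible for the class of regular epimorphisms: applying `L` to the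
pullback of a regular epimorphism `α : LT → LQ` along the coaugmentation
`ℓ^Q : Q → LQ` yields again a pullback square. -/
def Admissible (L : LocalizationFunctor) : Prop :=
  ∀ (T Q : XMod) (α : XModHom (L.obj T) (L.obj Q)), XModHom.RegEpi α →
    IsPullbackSquare (L.map (pbFst α (L.ell Q))) (L.map (pbSnd α (L.ell Q)))
      (L.map α) (L.map (L.ell Q))

/-- `L` is conditionally flat: the pullback of any `L`-flat short exact sequence
along any morphism is again `L`-flat. -/
def ConditionallyFlat (L : LocalizationFunctor) : Prop :=
  ∀ (N T Q : XMod) (κ : XModHom N T) (α : XModHom T Q) (hse : ShortExact κ α),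
    L.LFlat κ α →
      ∀ (Q' : XMod) (g : XModHom Q' Q),
        L.LFlat (pbIn κ α g hse.1.1) (pbSnd α g)

/-- A short exact sequence `1 → N → T → Q → 1` admits a fiberwise localization:
there is a short exact sequence `1 → LN → E → Q → 1` together with an
`L`-equivalence `T → E` compatible with the coaugmentation of `N`. -/
def AdmitsFiberwise (L : LocalizationFunctor) {N T Q : XMod} (κ : XModHom N T)
    (α : XModHom T Q) : Prop :=
  ∃ (E : XMod) (j : XModHom (L.obj N) E) (p : XModHom E Q) (e : XModHom T E),
    ShortExact j p ∧ XModHom.IsIso (L.map e) ∧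
      XModHom.comp e κ = XModHom.comp j (L.ell N) ∧ XModHom.comp p e = α

end LocalizationFunctor
section Kernel

variable {N T : XMod} (f : XModHom N T)

theorem ker_act_mem {b : N.G} (hb : b ∈ f.f2.ker) {n : N.M} (hn : n ∈ f.f1.ker) :
    N.act b n ∈ f.f1.ker := by
  have hb' : f.f2 b = 1 := hb
  have hn' : f.f1 n = 1 := hn
  show f.f1 (N.act b n) = 1
  rw [f.equiv, hb', hn', map_one]

/-- The automorphism of `ker f.f1` induced by an element of `ker f.f2`. -/
def kerActEquiv (b : ↥f.f2.ker) : ↥f.f1.ker ≃* ↥f.f1.ker where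
  toFun n := ⟨N.act b.1 n.1, ker_act_mem f b.2 n.2⟩
  invFun n := ⟨N.act b.1⁻¹ n.1, ker_act_mem f (f.f2.ker.inv_mem b.2) n.2⟩
  left_inv n := Subtype.ext (N.act_inv_act _ _)
  right_inv n := Subtype.ext (N.act_act_inv _ _)
  map_mul' n m := Subtype.ext (map_mul _ _ _)

/-- The kernel of a morphism of crossed modules, computed componentwise. -/
def kerXMod : XMod where
  M := ↥f.f1.ker
  G := ↥f.f2.ker
  act :=
    { toFun := kerActEquiv f
      map_one' := by
        apply MulEquiv.ext
        intro n
        apply Subtype.ext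
        show N.act (1 : ↥f.f2.ker).1 n.1 = n.1
        simp
      map_mul' := by
        intro b c
        apply MulEquiv.ext
        intro n
        apply Subtype.ext
        show N.act (b * c).1 n.1 = N.act b.1 (N.act c.1 n.1)
        simp [map_mul] }
  d :=
    { toFun := fun n => ⟨N.d n.1, by
        have hn : f.f1 n.1 = 1 := n.2
        show f.f2 (N.d n.1) = 1
        rw [← f.comm_d, hn, map_one]⟩
      map_one' := by
        apply Subtype.ext
        simp
      map_mul' := by
        intro a b
        apply Subtype.ext
        show N.d (a * b).1 = N.d a.1 * N.d b.1
        simp }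
  act_d := by
    intro b n
    apply Subtype.ext
    exact N.act_d _ _
  peiffer := by
    intro n m
    apply Subtype.ext
    exact N.peiffer _ _

/-- The inclusion of the kernel. -/
def kerIncl : XModHom (kerXMod f) N where
  f1 := f.f1.ker.subtype
  f2 := f.f2.ker.subtype
  comm_d := fun _ => rfl
  equiv := fun _ _ => rfl

end Kernel

/-- A crossed module is trivial if both underlying groups are trivial. -/
def XMod.IsTrivial (X : XMod) : Prop :=
  (∀ m : X.M, m = 1) ∧ ∀ b : X.G, b = 1

/-- `X` is `A`-null if the only morphism of crossed modules `A → X` is the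
trivial one. -/
def ANull (A X : XMod) : Prop :=
  ∀ φ : XModHom A X, φ = XModHom.triv A X

/-- `X` is `f`-local if precomposition with `f` is a bijection on morphisms
into `X`. -/
def FLocal {B C : XMod} (f : XModHom B C) (X : XMod) : Prop :=
  Function.Bijective fun φ : XModHom C X => XModHom.comp φ f

/-- The subgroup `[N₂, N₁]` of `N₁` generated by the elements `ᵇt·t⁻¹`. -/
def actCommutator (N : XMod) : Subgroup N.M :=
  Subgroup.closure {x | ∃ (b : N.G) (t : N.M), x = N.act b t * t⁻¹}

section NormalClosure

variable {A W : XMod} (φ : XModHom A W)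

/-- The level-2 part of the normal closure of the image of `φ`:
the normal closure of `φ₂(A₂)` in `W₂`. -/
def ncl2 : Subgroup W.G :=
  Subgroup.normalClosure (Set.range φ.f2)

/-- The level-1 part of the normal closure of the image of `φ`:
the subgroup `φ₁(A₁)^{W₂}·[φ₂(A₂)^{W₂}, W₁]` of `W₁`. -/
def ncl1 : Subgroup W.M :=
  Subgroup.closure
    ({x | ∃ (b : W.G) (m : A.M), x = W.act b (φ.f1 m)} ∪
      {x | ∃ s ∈ ncl2 φ, ∃ w : W.M, x = W.act s w * w⁻¹})

end NormalClosure

namespace XModHom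

theorem comp_assoc' {A B C D : XMod} (h : XModHom C D) (g : XModHom B C) (f : XModHom A B) :
    comp (comp h g) f = comp h (comp g f) :=
  ext (MonoidHom.comp_assoc _ _ _) (MonoidHom.comp_assoc _ _ _)

theorem id_comp' {A B : XMod} (f : XModHom A B) : comp (id B) f = f :=
  ext (MonoidHom.id_comp _) (MonoidHom.id_comp _)

theorem comp_id' {A B : XMod} (f : XModHom A B) : comp f (id A) = f :=
  ext (MonoidHom.comp_id _) (MonoidHom.comp_id _)

theorem IsIso.f1_injective {A B : XMod} {h : XModHom A B} (hi : h.IsIso) :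
    Function.Injective h.f1 := by
  obtain ⟨g, hg1, _⟩ := hi
  intro x y e
  have h1 := congrArg XModHom.f1 hg1
  have hx : g.f1 (h.f1 x) = x := DFunLike.congr_fun h1 x
  have hy : g.f1 (h.f1 y) = y := DFunLike.congr_fun h1 y
  rw [← hx, ← hy, e]

theorem IsIso.f2_injective {A B : XMod} {h : XModHom A B} (hi : h.IsIso) :
    Function.Injective h.f2 := by
  obtain ⟨g, hg1, _⟩ := hi
  intro x y e
  have h2 := congrArg XModHom.f2 hg1
  have hx : g.f2 (h.f2 x) = x := DFunLike.congr_fun h2 x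
  have hy : g.f2 (h.f2 y) = y := DFunLike.congr_fun h2 y
  rw [← hx, ← hy, e]

theorem IsIso.cancel_left {A B W : XMod} {h : XModHom A B} (hi : h.IsIso)
    {w w' : XModHom W A} (e : comp h w = comp h w') : w = w' := by
  obtain ⟨g, hg1, _⟩ := hi
  calc w = comp (comp g h) w := by rw [hg1, id_comp']
  _ = comp g (comp h w) := comp_assoc' _ _ _
  _ = comp g (comp h w') := by rw [e]
  _ = comp (comp g h) w' := (comp_assoc' _ _ _).symm
  _ = w' := by rw [hg1, id_comp']

/-- A morphism of crossed modules with bijective components is an isomorphism. -/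
theorem isIso_of_bijective {A B : XMod} (f : XModHom A B)
    (h1 : Function.Bijective f.f1) (h2 : Function.Bijective f.f2) : f.IsIso := by
  let e1 : A.M ≃* B.M := MulEquiv.ofBijective f.f1 h1
  let e2 : A.G ≃* B.G := MulEquiv.ofBijective f.f2 h2
  have he1 : ∀ a, e1 a = f.f1 a := fun _ => rfl
  have he2 : ∀ a, e2 a = f.f2 a := fun _ => rfl
  refine ⟨⟨e1.symm.toMonoidHom, e2.symm.toMonoidHom, ?_, ?_⟩, ?_, ?_⟩
  · intro m
    apply h2.1
    show f.f2 (A.d (e1.symm m)) = f.f2 (e2.symm (B.d m))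
    rw [← f.comm_d, ← he2, e2.apply_symm_apply, ← he1, e1.apply_symm_apply]
  · intro b m
    apply h1.1
    show f.f1 (e1.symm (B.act b m)) = f.f1 (A.act (e2.symm b) (e1.symm m))
    rw [f.equiv, ← he1, ← he1, ← he2, e1.apply_symm_apply, e1.apply_symm_apply,
      e2.apply_symm_apply]
  · exact ext (MonoidHom.ext fun a => e1.symm_apply_apply a)
      (MonoidHom.ext fun a => e2.symm_apply_apply a)
  · exact ext (MonoidHom.ext fun b => e1.apply_symm_apply b)
      (MonoidHom.ext fun b => e2.apply_symm_apply b)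

end XModHom

open scoped commutatorElement

/-- The abelianization functor on `XMod`, sending
`(N₁, N₂, ∂)` to `(N₁/[N₂,N₁], N₂/[N₂,N₂])` (characterized here by its
coaugmentation being the componentwise quotient map: surjective on both levels,
with level-1 kernel `[N₂,N₁]` and level-2 kernel the commutator subgroup of
`N₂`), is admissible for the class of regular epimorphisms. -/
theorem abelianization_admissible (L : LocalizationFunctor)
    (hAb : ∀ N : XMod,
      Function.Surjective (L.ell N).f1 ∧ Function.Surjective (L.ell N).f2 ∧
      (L.ell N).f1.ker = actCommutator N ∧
      (L.ell N).f2.ker = commutator N.G) :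
    L.Admissible := by
  intro T Q α hα
  obtain ⟨hsT1, hsT2, hkT1, hkT2⟩ := hAb (L.obj T)
  obtain ⟨hsQ1, hsQ2, hkQ1, hkQ2⟩ := hAb Q
  obtain ⟨hsP1, hsP2, hkP1, hkP2⟩ := hAb (pbXMod α (L.ell Q))
  have hisoT := L.iso_ell_obj T
  have hinj1 : Function.Injective (L.ell (L.obj T)).f1 := hisoT.f1_injective
  have hinj2 : Function.Injective (L.ell (L.obj T)).f2 := hisoT.f2_injective
  -- the action of `(L.obj T).G` on `(L.obj T).M` is trivial
  have hact : ∀ (b : (L.obj T).G) (t : (L.obj T).M), (L.obj T).act b t = t := by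
    intro b t
    have hmem : (L.obj T).act b t * t⁻¹ ∈ (L.ell (L.obj T)).f1.ker := by
      rw [hkT1]; exact Subgroup.subset_closure ⟨b, t, rfl⟩
    have h1 : (L.obj T).act b t * t⁻¹ = 1 := hinj1 (by rw [map_one]; exact hmem)
    exact mul_inv_eq_one.mp h1
  -- `(L.obj T).G` is abelian
  have hcomm : ∀ a b : (L.obj T).G, ⁅a, b⁆ = 1 := by
    intro a b
    have hmem : ⁅a, b⁆ ∈ (L.ell (L.obj T)).f2.ker := by
      rw [hkT2, commutator_def]
      exact Subgroup.commutator_mem_commutator (Subgroup.mem_top a) (Subgroup.mem_top b)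
    exact hinj2 (by rw [map_one]; exact hmem)
  -- surjectivity of the projections of the pullback
  have hp1s1 : Function.Surjective (pbFst α (L.ell Q)).f1 := by
    intro t
    obtain ⟨q, hq⟩ := hsQ1 (α.f1 t)
    exact ⟨⟨(t, q), hq.symm⟩, rfl⟩
  have hp1s2 : Function.Surjective (pbFst α (L.ell Q)).f2 := by
    intro t
    obtain ⟨q, hq⟩ := hsQ2 (α.f2 t)
    exact ⟨⟨(t, q), hq.symm⟩, rfl⟩
  have hp2s1 : Function.Surjective (pbSnd α (L.ell Q)).f1 := by
    intro q
    obtain ⟨t, ht⟩ := hα.1 ((L.ell Q).f1 q)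
    exact ⟨⟨(t, q), ht⟩, rfl⟩
  have hp2s2 : Function.Surjective (pbSnd α (L.ell Q)).f2 := by
    intro q
    obtain ⟨t, ht⟩ := hα.2 ((L.ell Q).f2 q)
    exact ⟨⟨(t, q), ht⟩, rfl⟩
  -- the first projection kills the level-1 "commutator" of the pullback
  have hACker : ∀ y ∈ actCommutator (pbXMod α (L.ell Q)), (pbFst α (L.ell Q)).f1 y = 1 := by
    intro y hy
    have hle : actCommutator (pbXMod α (L.ell Q)) ≤ (pbFst α (L.ell Q)).f1.ker := by
      refine (Subgroup.closure_le _).mpr ?_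
      rintro x ⟨b, t, rfl⟩
      show (pbFst α (L.ell Q)).f1 ((pbXMod α (L.ell Q)).act b t * t⁻¹) = 1
      have h0 : (pbFst α (L.ell Q)).f1 ((pbXMod α (L.ell Q)).act b t * t⁻¹)
          = (L.obj T).act b.1.1 t.1.1 * (t.1.1)⁻¹ := rfl
      rw [h0, hact, mul_inv_cancel]
    exact hle hy
  -- the first projection kills the level-2 commutator of the pullback
  have hCker : ∀ y ∈ commutator (pbXMod α (L.ell Q)).G, (pbFst α (L.ell Q)).f2 y = 1 := by
    intro y hy
    have hle : commutator (pbXMod α (L.ell Q)).G ≤ (pbFst α (L.ell Q)).f2.ker := by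
      rw [commutator_def]
      refine Subgroup.commutator_le.mpr ?_
      intro a _ b _
      show (pbFst α (L.ell Q)).f2 ⁅a, b⁆ = 1
      rw [map_commutatorElement]
      exact hcomm _ _
    exact hle hy
  -- every level-1 "commutator" of `Q` lifts to one of the pullback
  have hACsurj : ∀ m ∈ actCommutator Q, ∃ y ∈ actCommutator (pbXMod α (L.ell Q)),
      (pbSnd α (L.ell Q)).f1 y = m := by
    intro m hm
    have hle : actCommutator Q ≤ Subgroup.map (pbSnd α (L.ell Q)).f1
        (actCommutator (pbXMod α (L.ell Q))) := by
      refine (Subgroup.closure_le _).mpr ?_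
      rintro x ⟨b, t, rfl⟩
      obtain ⟨xb, hxb⟩ := hα.2 ((L.ell Q).f2 b)
      obtain ⟨u, hu⟩ := hα.1 ((L.ell Q).f1 t)
      exact Subgroup.mem_map.mpr
        ⟨(pbXMod α (L.ell Q)).act ⟨(xb, b), hxb⟩ ⟨(u, t), hu⟩ * (⟨(u, t), hu⟩ : _)⁻¹,
          Subgroup.subset_closure ⟨⟨(xb, b), hxb⟩, ⟨(u, t), hu⟩, rfl⟩, rfl⟩
    exact Subgroup.mem_map.mp (hle hm)
  -- every level-2 commutator of `Q` lifts to one of the pullback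
  have hCsurj : ∀ c ∈ commutator Q.G, ∃ y ∈ commutator (pbXMod α (L.ell Q)).G,
      (pbSnd α (L.ell Q)).f2 y = c := by
    intro c hc
    have hle : commutator Q.G ≤ Subgroup.map (pbSnd α (L.ell Q)).f2
        (commutator (pbXMod α (L.ell Q)).G) := by
      rw [commutator_def Q.G]
      refine Subgroup.commutator_le.mpr ?_
      intro a _ b _
      obtain ⟨A, hA⟩ := hp2s2 a
      obtain ⟨B, hB⟩ := hp2s2 b
      refine Subgroup.mem_map.mpr ⟨⁅A, B⁆, ?_, ?_⟩
      · rw [commutator_def]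
        exact Subgroup.commutator_mem_commutator (Subgroup.mem_top A) (Subgroup.mem_top B)
      · rw [map_commutatorElement, hA, hB]
    exact Subgroup.mem_map.mp (hle hc)
  -- naturality, componentwise
  have hnat := L.natural (pbFst α (L.ell Q))
  have hnat1 : ∀ x, (L.ell (L.obj T)).f1 ((pbFst α (L.ell Q)).f1 x)
      = (L.map (pbFst α (L.ell Q))).f1 ((L.ell (pbXMod α (L.ell Q))).f1 x) :=
    fun x => DFunLike.congr_fun (congrArg XModHom.f1 hnat) x
  have hnat2 : ∀ x, (L.ell (L.obj T)).f2 ((pbFst α (L.ell Q)).f2 x)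
      = (L.map (pbFst α (L.ell Q))).f2 ((L.ell (pbXMod α (L.ell Q))).f2 x) :=
    fun x => DFunLike.congr_fun (congrArg XModHom.f2 hnat) x
  -- `L.map (pbFst α (L.ell Q))` is bijective on both levels
  have hLs1 : Function.Surjective (L.map (pbFst α (L.ell Q))).f1 := by
    intro z
    obtain ⟨t, ht⟩ := hsT1 z
    obtain ⟨x, hx⟩ := hp1s1 t
    exact ⟨(L.ell (pbXMod α (L.ell Q))).f1 x, by rw [← hnat1, hx, ht]⟩
  have hLs2 : Function.Surjective (L.map (pbFst α (L.ell Q))).f2 := by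
    intro z
    obtain ⟨t, ht⟩ := hsT2 z
    obtain ⟨x, hx⟩ := hp1s2 t
    exact ⟨(L.ell (pbXMod α (L.ell Q))).f2 x, by rw [← hnat2, hx, ht]⟩
  have hLi1 : Function.Injective (L.map (pbFst α (L.ell Q))).f1 := by
    rw [injective_iff_map_eq_one]
    intro z hz
    obtain ⟨x, rfl⟩ := hsP1 z
    have hx1 : (pbFst α (L.ell Q)).f1 x = 1 := by
      apply hinj1
      rw [hnat1, hz, map_one]
    have hx11 : x.1.1 = 1 := hx1
    have hx12 : x.1.2 ∈ actCommutator Q := by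
      rw [← hkQ1]
      show (L.ell Q).f1 x.1.2 = 1
      rw [← x.2, hx11, map_one]
    obtain ⟨y, hy, hy2⟩ := hACsurj x.1.2 hx12
    have hxy : x = y := by
      apply Subtype.ext
      apply Prod.ext
      · rw [hx11]; exact (hACker y hy).symm
      · exact hy2.symm
    show x ∈ (L.ell (pbXMod α (L.ell Q))).f1.ker
    rw [hkP1, hxy]; exact hy
  have hLi2 : Function.Injective (L.map (pbFst α (L.ell Q))).f2 := by
    rw [injective_iff_map_eq_one]
    intro z hz
    obtain ⟨x, rfl⟩ := hsP2 z
    have hx1 : (pbFst α (L.ell Q)).f2 x = 1 := by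
      apply hinj2
      rw [hnat2, hz, map_one]
    have hx11 : x.1.1 = 1 := hx1
    have hx12 : x.1.2 ∈ commutator Q.G := by
      rw [← hkQ2]
      show (L.ell Q).f2 x.1.2 = 1
      rw [← x.2, hx11, map_one]
    obtain ⟨y, hy, hy2⟩ := hCsurj x.1.2 hx12
    have hxy : x = y := by
      apply Subtype.ext
      apply Prod.ext
      · rw [hx11]; exact (hCker y hy).symm
      · exact hy2.symm
    show x ∈ (L.ell (pbXMod α (L.ell Q))).f2.ker
    rw [hkP2, hxy]; exact hy
  -- hence it is an isomorphism
  obtain ⟨ψ, hψ1, hψ2⟩ := XModHom.isIso_of_bijective (L.map (pbFst α (L.ell Q)))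
    ⟨hLi1, hLs1⟩ ⟨hLi2, hLs2⟩
  -- the square commutes
  have hsq : XModHom.comp α (pbFst α (L.ell Q))
      = XModHom.comp (L.ell Q) (pbSnd α (L.ell Q)) :=
    XModHom.ext (MonoidHom.ext fun w => w.2) (MonoidHom.ext fun w => w.2)
  have hsqL : XModHom.comp (L.map α) (L.map (pbFst α (L.ell Q)))
      = XModHom.comp (L.map (L.ell Q)) (L.map (pbSnd α (L.ell Q))) := by
    rw [← L.map_comp, ← L.map_comp, hsq]
  refine ⟨hsqL, ?_⟩
  intro W u v huv
  refine ⟨XModHom.comp ψ u, ⟨?_, ?_⟩, ?_⟩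
  · rw [← XModHom.comp_assoc', hψ2, XModHom.id_comp']
  · apply (L.iso_map_ell Q).cancel_left
    calc XModHom.comp (L.map (L.ell Q))
          (XModHom.comp (L.map (pbSnd α (L.ell Q))) (XModHom.comp ψ u))
        = XModHom.comp (XModHom.comp (L.map (L.ell Q)) (L.map (pbSnd α (L.ell Q))))
            (XModHom.comp ψ u) := (XModHom.comp_assoc' _ _ _).symm
      _ = XModHom.comp (XModHom.comp (L.map α) (L.map (pbFst α (L.ell Q))))
            (XModHom.comp ψ u) := by rw [hsqL]
      _ = XModHom.comp (L.map α)
            (XModHom.comp (L.map (pbFst α (L.ell Q))) (XModHom.comp ψ u)) :=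
          XModHom.comp_assoc' _ _ _
      _ = XModHom.comp (L.map α) u := by
          rw [← XModHom.comp_assoc' (L.map (pbFst α (L.ell Q))) ψ u, hψ2,
            XModHom.id_comp']
      _ = XModHom.comp (L.map (L.ell Q)) v := huv
  · rintro w' ⟨h1', h2'⟩
    rw [← h1', ← XModHom.comp_assoc', hψ1, XModHom.id_comp']
end

section
/- Let f : B → C be a morphism of crossed modules and let L_f be the associated localization functor on XMod (the localization functor whose local objects are exactly the f-local crossed modules). If L_f is a regular-epi localization and for every crossed module T the kernel ker(ℓ^T : T → L_f T) is L_f-acyclic, then L_f is a nullification functor: there exists a crossed module A such that the L_f-local crossed modules are exactly the A-null crossed modules. -/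
set_option linter.unusedVariables false

section NullificationAux

open XModHom

theorem xcongr_f1 {A B : XMod} {g h : XModHom A B} (e : g = h) (x : A.M) :
    g.f1 x = h.f1 x := by rw [e]

theorem xcongr_f2 {A B : XMod} {g h : XModHom A B} (e : g = h) (x : A.G) :
    g.f2 x = h.f2 x := by rw [e]

theorem xcomp_assoc {A B C D : XMod} (h : XModHom C D) (g : XModHom B C) (f : XModHom A B) :
    comp (comp h g) f = comp h (comp g f) :=
  XModHom.ext rfl rfl

theorem xid_comp {A B : XMod} (u : XModHom A B) : comp (XModHom.id B) u = u :=
  XModHom.ext rfl rfl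

theorem xcomp_id {A B : XMod} (u : XModHom A B) : comp u (XModHom.id A) = u :=
  XModHom.ext rfl rfl

theorem xtriv_comp {A B X : XMod} (u : XModHom A B) :
    comp (triv B X) u = triv A X :=
  XModHom.ext (MonoidHom.ext fun _ => rfl) (MonoidHom.ext fun _ => rfl)

theorem xcancel_epi {T S X : XMod} {p : XModHom T S} (hp : p.RegEpi)
    {g h : XModHom S X} (e : comp g p = comp h p) : g = h := by
  apply XModHom.ext
  · apply MonoidHom.ext; intro x
    obtain ⟨t, rfl⟩ := hp.1 x
    exact xcongr_f1 e t
  · apply MonoidHom.ext; intro x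
    obtain ⟨t, rfl⟩ := hp.2 x
    exact xcongr_f2 e t

/-- The action automorphism for the product crossed module. -/
def prodActEquiv (P Q : XMod) (b : P.G × Q.G) : (P.M × Q.M) ≃* (P.M × Q.M) where
  toFun m := (P.act b.1 m.1, Q.act b.2 m.2)
  invFun m := (P.act b.1⁻¹ m.1, Q.act b.2⁻¹ m.2)
  left_inv m := Prod.ext (P.act_inv_act _ _) (Q.act_inv_act _ _)
  right_inv m := Prod.ext (P.act_act_inv _ _) (Q.act_act_inv _ _)
  map_mul' m n := Prod.ext (map_mul _ _ _) (map_mul _ _ _)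

/-- The product of two crossed modules. -/
def prodXMod (P Q : XMod) : XMod where
  M := P.M × Q.M
  G := P.G × Q.G
  act :=
    { toFun := prodActEquiv P Q
      map_one' := by
        apply MulEquiv.ext; intro m
        show (P.act (1 : P.G × Q.G).1 m.1, Q.act (1 : P.G × Q.G).2 m.2) = m
        simp
      map_mul' := by
        intro b c
        apply MulEquiv.ext; intro m
        show (P.act (b * c).1 m.1, Q.act (b * c).2 m.2)
            = (P.act b.1 (P.act c.1 m.1), Q.act b.2 (Q.act c.2 m.2))
        simp [map_mul] }
  d :=
    { toFun := fun m => (P.d m.1, Q.d m.2)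
      map_one' := by
        apply Prod.ext <;> simp
      map_mul' := by
        intro a b
        apply Prod.ext <;> simp }
  act_d := by
    intro b t
    show (P.d (P.act b.1 t.1), Q.d (Q.act b.2 t.2)) = b * (P.d t.1, Q.d t.2) * b⁻¹
    exact Prod.ext (P.act_d _ _) (Q.act_d _ _)
  peiffer := by
    intro t s
    show (P.act (P.d t.1) s.1, Q.act (Q.d t.2) s.2) = t * s * t⁻¹
    exact Prod.ext (P.peiffer _ _) (Q.peiffer _ _)

/-- Left inclusion into the product crossed module. -/
def prodInl (P Q : XMod) : XModHom P (prodXMod P Q) where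
  f1 := MonoidHom.inl P.M Q.M
  f2 := MonoidHom.inl P.G Q.G
  comm_d := by
    intro n
    refine Prod.ext rfl ?_
    show Q.d 1 = 1
    simp
  equiv := by
    intro b n
    refine Prod.ext rfl ?_
    show (1 : Q.M) = Q.act 1 1
    simp

/-- Right inclusion into the product crossed module. -/
def prodInr (P Q : XMod) : XModHom Q (prodXMod P Q) where
  f1 := MonoidHom.inr P.M Q.M
  f2 := MonoidHom.inr P.G Q.G
  comm_d := by
    intro n
    refine Prod.ext ?_ rfl
    show P.d 1 = 1
    simp
  equiv := by
    intro b n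
    refine Prod.ext ?_ rfl
    show (1 : P.M) = P.act 1 1
    simp

/-- First projection of the product crossed module. -/
def prodFst (P Q : XMod) : XModHom (prodXMod P Q) P where
  f1 := MonoidHom.fst P.M Q.M
  f2 := MonoidHom.fst P.G Q.G
  comm_d := fun _ => rfl
  equiv := fun _ _ => rfl

/-- Second projection of the product crossed module. -/
def prodSnd (P Q : XMod) : XModHom (prodXMod P Q) Q where
  f1 := MonoidHom.snd P.M Q.M
  f2 := MonoidHom.snd P.G Q.G
  comm_d := fun _ => rfl
  equiv := fun _ _ => rfl

theorem xfst_inl (P Q : XMod) : comp (prodFst P Q) (prodInl P Q) = XModHom.id P :=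
  XModHom.ext (MonoidHom.ext fun _ => rfl) (MonoidHom.ext fun _ => rfl)

theorem xsnd_inr (P Q : XMod) : comp (prodSnd P Q) (prodInr P Q) = XModHom.id Q :=
  XModHom.ext (MonoidHom.ext fun _ => rfl) (MonoidHom.ext fun _ => rfl)

theorem xprod_hom_trivial {P Q X : XMod} (φ : XModHom (prodXMod P Q) X)
    (h1 : comp φ (prodInl P Q) = triv P X) (h2 : comp φ (prodInr P Q) = triv Q X) :
    φ = triv (prodXMod P Q) X := by
  apply XModHom.ext
  · apply MonoidHom.ext; intro m
    have a1 : φ.f1 (m.1, (1 : Q.M)) = 1 := xcongr_f1 h1 m.1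
    have a2 : φ.f1 ((1 : P.M), m.2) = 1 := xcongr_f1 h2 m.2
    have e : ((m.1, (1 : Q.M)) * ((1 : P.M), m.2) : P.M × Q.M) = m :=
      Prod.ext (by simp) (by simp)
    show φ.f1 m = 1
    rw [← e]; exact (map_mul φ.f1 _ _).trans (by rw [a1, a2, one_mul])
  · apply MonoidHom.ext; intro b
    have a1 : φ.f2 (b.1, (1 : Q.G)) = 1 := xcongr_f2 h1 b.1
    have a2 : φ.f2 ((1 : P.G), b.2) = 1 := xcongr_f2 h2 b.2
    have e : ((b.1, (1 : Q.G)) * ((1 : P.G), b.2) : P.G × Q.G) = b :=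
      Prod.ext (by simp) (by simp)
    show φ.f2 b = 1
    rw [← e]; exact (map_mul φ.f2 _ _).trans (by rw [a1, a2, one_mul])

theorem xlift_of_local (L : LocalizationFunctor) {T X : XMod}
    (hX : XModHom.IsIso (L.ell X)) (u : XModHom T X) :
    ∃ ub : XModHom (L.obj T) X, comp ub (L.ell T) = u := by
  obtain ⟨g, hg1, hg2⟩ := hX
  refine ⟨comp g (L.map u), ?_⟩
  calc comp (comp g (L.map u)) (L.ell T) = comp g (comp (L.map u) (L.ell T)) :=
        xcomp_assoc _ _ _
    _ = comp g (comp (L.ell X) u) := by rw [← L.natural u]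
    _ = comp (comp g (L.ell X)) u := (xcomp_assoc _ _ _).symm
    _ = comp (XModHom.id X) u := by rw [hg1]
    _ = u := xid_comp u

theorem xacyclic_to_local {L : LocalizationFunctor} {A X : XMod}
    (htriv : (L.obj A).IsTrivial) (hX : XModHom.IsIso (L.ell X)) (φ : XModHom A X) :
    φ = triv A X := by
  obtain ⟨g, hg1, hg2⟩ := hX
  apply XModHom.ext
  · apply MonoidHom.ext; intro a
    have hnat : (L.ell X).f1 (φ.f1 a) = (L.map φ).f1 ((L.ell A).f1 a) :=
      xcongr_f1 (L.natural φ) a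
    have hz : (L.ell X).f1 (φ.f1 a) = 1 := by
      rw [hnat, htriv.1 ((L.ell A).f1 a), map_one]
    show φ.f1 a = 1
    calc φ.f1 a = g.f1 ((L.ell X).f1 (φ.f1 a)) := (xcongr_f1 hg1 (φ.f1 a)).symm
      _ = g.f1 1 := by rw [hz]
      _ = 1 := map_one _
  · apply MonoidHom.ext; intro a
    have hnat : (L.ell X).f2 (φ.f2 a) = (L.map φ).f2 ((L.ell A).f2 a) :=
      xcongr_f2 (L.natural φ) a
    have hz : (L.ell X).f2 (φ.f2 a) = 1 := by
      rw [hnat, htriv.2 ((L.ell A).f2 a), map_one]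
    show φ.f2 a = 1
    calc φ.f2 a = g.f2 ((L.ell X).f2 (φ.f2 a)) := (xcongr_f2 hg1 (φ.f2 a)).symm
      _ = g.f2 1 := by rw [hz]
      _ = 1 := map_one _

theorem xLf_iso {B C : XMod} (f : XModHom B C) (L : LocalizationFunctor)
    (hloc : ∀ X : XMod, L.IsLocal X ↔ FLocal f X) (hepi : L.RegEpiLoc) :
    ∃ e : XModHom (L.obj C) (L.obj B),
      comp e (L.map f) = XModHom.id (L.obj B) ∧
        comp (L.map f) e = XModHom.id (L.obj C) := by
  have hB : FLocal f (L.obj B) := (hloc _).mp (L.iso_ell_obj B)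
  have hC : FLocal f (L.obj C) := (hloc _).mp (L.iso_ell_obj C)
  obtain ⟨g, hg0⟩ := hB.2 (L.ell B)
  have hg : comp g f = L.ell B := hg0
  obtain ⟨e, he⟩ := xlift_of_local L (L.iso_ell_obj B) g
  have hfg : comp (L.map f) g = L.ell C := by
    apply hC.1
    show comp (comp (L.map f) g) f = comp (L.ell C) f
    calc comp (comp (L.map f) g) f = comp (L.map f) (comp g f) := xcomp_assoc _ _ _
      _ = comp (L.map f) (L.ell B) := by rw [hg]
      _ = comp (L.ell C) f := (L.natural f).symm
  refine ⟨e, ?_, ?_⟩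
  · apply xcancel_epi (hepi B)
    calc comp (comp e (L.map f)) (L.ell B) = comp e (comp (L.map f) (L.ell B)) :=
          xcomp_assoc _ _ _
      _ = comp e (comp (L.ell C) f) := by rw [← L.natural f]
      _ = comp (comp e (L.ell C)) f := (xcomp_assoc _ _ _).symm
      _ = comp g f := by rw [he]
      _ = L.ell B := hg
      _ = comp (XModHom.id (L.obj B)) (L.ell B) := (xid_comp _).symm
  · apply xcancel_epi (hepi C)
    calc comp (comp (L.map f) e) (L.ell C) = comp (L.map f) (comp e (L.ell C)) :=
          xcomp_assoc _ _ _
      _ = comp (L.map f) g := by rw [he]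
      _ = L.ell C := hfg
      _ = comp (XModHom.id (L.obj C)) (L.ell C) := (xid_comp _).symm

theorem xfactor (L : LocalizationFunctor) {T X : XMod} (u : XModHom T X)
    (hepiT : XModHom.RegEpi (L.ell T))
    (h1 : ∀ m : T.M, (L.ell T).f1 m = 1 → u.f1 m = 1)
    (h2 : ∀ b : T.G, (L.ell T).f2 b = 1 → u.f2 b = 1) :
    ∃ ub : XModHom (L.obj T) X, comp ub (L.ell T) = u := by
  classical
  have w1 : ∀ a b : T.M, (L.ell T).f1 a = (L.ell T).f1 b → u.f1 a = u.f1 b := by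
    intro a b hab
    have hk : (L.ell T).f1 (a⁻¹ * b) = 1 := by
      rw [map_mul, map_inv, hab, inv_mul_cancel]
    have hu := h1 _ hk
    have h' : (u.f1 a)⁻¹ * u.f1 b = 1 := by
      rw [← map_inv, ← map_mul]; exact hu
    exact inv_mul_eq_one.mp h'
  have w2 : ∀ a b : T.G, (L.ell T).f2 a = (L.ell T).f2 b → u.f2 a = u.f2 b := by
    intro a b hab
    have hk : (L.ell T).f2 (a⁻¹ * b) = 1 := by
      rw [map_mul, map_inv, hab, inv_mul_cancel]
    have hu := h2 _ hk
    have h' : (u.f2 a)⁻¹ * u.f2 b = 1 := by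
      rw [← map_inv, ← map_mul]; exact hu
    exact inv_mul_eq_one.mp h'
  choose s1 hs1 using hepiT.1
  choose s2 hs2 using hepiT.2
  refine ⟨{ f1 :=
              { toFun := fun y => u.f1 (s1 y)
                map_one' := ?_
                map_mul' := ?_ }
            f2 :=
              { toFun := fun y => u.f2 (s2 y)
                map_one' := ?_
                map_mul' := ?_ }
            comm_d := ?_
            equiv := ?_ }, ?_⟩
  · show u.f1 (s1 1) = 1
    have h : (L.ell T).f1 (s1 1) = (L.ell T).f1 1 := by rw [hs1, map_one]
    rw [w1 _ _ h, map_one]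
  · intro y z
    show u.f1 (s1 (y * z)) = u.f1 (s1 y) * u.f1 (s1 z)
    have h : (L.ell T).f1 (s1 (y * z)) = (L.ell T).f1 (s1 y * s1 z) := by
      rw [hs1, map_mul, hs1, hs1]
    rw [w1 _ _ h, map_mul]
  · show u.f2 (s2 1) = 1
    have h : (L.ell T).f2 (s2 1) = (L.ell T).f2 1 := by rw [hs2, map_one]
    rw [w2 _ _ h, map_one]
  · intro y z
    show u.f2 (s2 (y * z)) = u.f2 (s2 y) * u.f2 (s2 z)
    have h : (L.ell T).f2 (s2 (y * z)) = (L.ell T).f2 (s2 y * s2 z) := by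
      rw [hs2, map_mul, hs2, hs2]
    rw [w2 _ _ h, map_mul]
  · intro y
    show X.d (u.f1 (s1 y)) = u.f2 (s2 ((L.obj T).d y))
    rw [u.comm_d]
    apply w2
    rw [hs2, ← (L.ell T).comm_d, hs1]
  · intro b y
    show u.f1 (s1 ((L.obj T).act b y)) = X.act (u.f2 (s2 b)) (u.f1 (s1 y))
    have e1 : u.f1 (s1 ((L.obj T).act b y)) = u.f1 (T.act (s2 b) (s1 y)) := by
      apply w1
      rw [hs1, (L.ell T).equiv, hs2, hs1]
    rw [e1, u.equiv]
  · apply XModHom.ext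
    · apply MonoidHom.ext; intro t
      show u.f1 (s1 ((L.ell T).f1 t)) = u.f1 t
      exact w1 _ _ (by rw [hs1])
    · apply MonoidHom.ext; intro t
      show u.f2 (s2 ((L.ell T).f2 t)) = u.f2 t
      exact w2 _ _ (by rw [hs2])

end NullificationAux

/-- Let `f : B → C` be a morphism of crossed modules and
`L_f` the associated localization functor (its local objects are exactly the
`f`-local crossed modules).  If `L_f` is a regular-epi localization and the
kernel of every coaugmentation is `L_f`-acyclic, then `L_f` is a nullification
functor: there is a crossed module `A` whose null objects are exactly the
`L_f`-local crossed modules. -/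
theorem acyclic_kernels_nullification {B C : XMod} (f : XModHom B C)
    (L : LocalizationFunctor)
    (hloc : ∀ X : XMod, L.IsLocal X ↔ FLocal f X)
    (hepi : L.RegEpiLoc)
    (hacy : ∀ T : XMod, (L.obj (kerXMod (L.ell T))).IsTrivial) :
    ∃ A : XMod, ∀ X : XMod, L.IsLocal X ↔ ANull A X := by
    classical
  refine ⟨prodXMod (kerXMod (L.ell B)) (kerXMod (L.ell C)), fun X => ?_⟩
  constructor
  · intro hX φ
    exact xprod_hom_trivial φ (xacyclic_to_local (hacy B) hX _)
      (xacyclic_to_local (hacy C) hX _)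
  · intro hnull
    have kerB : ∀ u : XModHom B X,
        XModHom.comp u (kerIncl (L.ell B)) = XModHom.triv (kerXMod (L.ell B)) X := by
      intro u
      have h0 := hnull (XModHom.comp (XModHom.comp u (kerIncl (L.ell B)))
        (prodFst (kerXMod (L.ell B)) (kerXMod (L.ell C))))
      calc XModHom.comp u (kerIncl (L.ell B))
          = XModHom.comp (XModHom.comp u (kerIncl (L.ell B)))
              (XModHom.id (kerXMod (L.ell B))) := (xcomp_id _).symm
        _ = XModHom.comp (XModHom.comp u (kerIncl (L.ell B)))
              (XModHom.comp (prodFst (kerXMod (L.ell B)) (kerXMod (L.ell C))) (prodInl (kerXMod (L.ell B)) (kerXMod (L.ell C)))) := by rw [xfst_inl (kerXMod (L.ell B)) (kerXMod (L.ell C))]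
        _ = XModHom.comp (XModHom.comp (XModHom.comp u (kerIncl (L.ell B)))
              (prodFst (kerXMod (L.ell B)) (kerXMod (L.ell C)))) (prodInl (kerXMod (L.ell B)) (kerXMod (L.ell C))) := (xcomp_assoc _ _ _).symm
        _ = XModHom.comp (XModHom.triv (prodXMod (kerXMod (L.ell B)) (kerXMod (L.ell C))) X) (prodInl (kerXMod (L.ell B)) (kerXMod (L.ell C))) := by rw [h0]
        _ = XModHom.triv (kerXMod (L.ell B)) X := xtriv_comp _
    have kerC : ∀ u : XModHom C X,
        XModHom.comp u (kerIncl (L.ell C)) = XModHom.triv (kerXMod (L.ell C)) X := by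
      intro u
      have h0 := hnull (XModHom.comp (XModHom.comp u (kerIncl (L.ell C)))
        (prodSnd (kerXMod (L.ell B)) (kerXMod (L.ell C))))
      calc XModHom.comp u (kerIncl (L.ell C))
          = XModHom.comp (XModHom.comp u (kerIncl (L.ell C)))
              (XModHom.id (kerXMod (L.ell C))) := (xcomp_id _).symm
        _ = XModHom.comp (XModHom.comp u (kerIncl (L.ell C)))
              (XModHom.comp (prodSnd (kerXMod (L.ell B)) (kerXMod (L.ell C))) (prodInr (kerXMod (L.ell B)) (kerXMod (L.ell C)))) := by rw [xsnd_inr (kerXMod (L.ell B)) (kerXMod (L.ell C))]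
        _ = XModHom.comp (XModHom.comp (XModHom.comp u (kerIncl (L.ell C)))
              (prodSnd (kerXMod (L.ell B)) (kerXMod (L.ell C)))) (prodInr (kerXMod (L.ell B)) (kerXMod (L.ell C))) := (xcomp_assoc _ _ _).symm
        _ = XModHom.comp (XModHom.triv (prodXMod (kerXMod (L.ell B)) (kerXMod (L.ell C))) X) (prodInr (kerXMod (L.ell B)) (kerXMod (L.ell C))) := by rw [h0]
        _ = XModHom.triv (kerXMod (L.ell C)) X := xtriv_comp _
    have killB1 : ∀ (u : XModHom B X) (m : B.M), (L.ell B).f1 m = 1 → u.f1 m = 1 :=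
      fun u m hm => xcongr_f1 (kerB u) ⟨m, hm⟩
    have killB2 : ∀ (u : XModHom B X) (b : B.G), (L.ell B).f2 b = 1 → u.f2 b = 1 :=
      fun u b hb => xcongr_f2 (kerB u) ⟨b, hb⟩
    have killC1 : ∀ (u : XModHom C X) (m : C.M), (L.ell C).f1 m = 1 → u.f1 m = 1 :=
      fun u m hm => xcongr_f1 (kerC u) ⟨m, hm⟩
    have killC2 : ∀ (u : XModHom C X) (b : C.G), (L.ell C).f2 b = 1 → u.f2 b = 1 :=
      fun u b hb => xcongr_f2 (kerC u) ⟨b, hb⟩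
    obtain ⟨e, he1, he2⟩ := xLf_iso f L hloc hepi
    refine (hloc X).mpr ⟨?_, ?_⟩
    · intro φ ψ h
      have h' : XModHom.comp φ f = XModHom.comp ψ f := h
      obtain ⟨φ', hφ⟩ := xfactor L φ (hepi C) (killC1 φ) (killC2 φ)
      obtain ⟨ψ', hψ⟩ := xfactor L ψ (hepi C) (killC1 ψ) (killC2 ψ)
      have hstep : XModHom.comp φ' (L.map f) = XModHom.comp ψ' (L.map f) := by
        apply xcancel_epi (hepi B)
        calc XModHom.comp (XModHom.comp φ' (L.map f)) (L.ell B)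
            = XModHom.comp φ' (XModHom.comp (L.map f) (L.ell B)) := xcomp_assoc _ _ _
          _ = XModHom.comp φ' (XModHom.comp (L.ell C) f) := by rw [← L.natural f]
          _ = XModHom.comp (XModHom.comp φ' (L.ell C)) f := (xcomp_assoc _ _ _).symm
          _ = XModHom.comp φ f := by rw [hφ]
          _ = XModHom.comp ψ f := h'
          _ = XModHom.comp (XModHom.comp ψ' (L.ell C)) f := by rw [hψ]
          _ = XModHom.comp ψ' (XModHom.comp (L.ell C) f) := xcomp_assoc _ _ _
          _ = XModHom.comp ψ' (XModHom.comp (L.map f) (L.ell B)) := by rw [L.natural f]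
          _ = XModHom.comp (XModHom.comp ψ' (L.map f)) (L.ell B) := (xcomp_assoc _ _ _).symm
      have heq : φ' = ψ' := by
        calc φ' = XModHom.comp φ' (XModHom.id (L.obj C)) := (xcomp_id _).symm
          _ = XModHom.comp φ' (XModHom.comp (L.map f) e) := by rw [he2]
          _ = XModHom.comp (XModHom.comp φ' (L.map f)) e := (xcomp_assoc _ _ _).symm
          _ = XModHom.comp (XModHom.comp ψ' (L.map f)) e := by rw [hstep]
          _ = XModHom.comp ψ' (XModHom.comp (L.map f) e) := xcomp_assoc _ _ _
          _ = XModHom.comp ψ' (XModHom.id (L.obj C)) := by rw [he2]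
          _ = ψ' := xcomp_id _
      rw [← hφ, ← hψ, heq]
    · intro u
      obtain ⟨ub, hub⟩ := xfactor L u (hepi B) (killB1 u) (killB2 u)
      refine ⟨XModHom.comp ub (XModHom.comp e (L.ell C)), ?_⟩
      show XModHom.comp (XModHom.comp ub (XModHom.comp e (L.ell C))) f = u
      calc XModHom.comp (XModHom.comp ub (XModHom.comp e (L.ell C))) f
          = XModHom.comp ub (XModHom.comp (XModHom.comp e (L.ell C)) f) := xcomp_assoc _ _ _
        _ = XModHom.comp ub (XModHom.comp e (XModHom.comp (L.ell C) f)) := by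
            rw [xcomp_assoc]
        _ = XModHom.comp ub (XModHom.comp e (XModHom.comp (L.map f) (L.ell B))) := by
            rw [L.natural f]
        _ = XModHom.comp ub (XModHom.comp (XModHom.comp e (L.map f)) (L.ell B)) := by
            rw [xcomp_assoc]
        _ = XModHom.comp ub (XModHom.comp (XModHom.id (L.obj B)) (L.ell B)) := by rw [he1]
        _ = XModHom.comp ub (L.ell B) := by rw [xid_comp]
        _ = u := hub
end
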